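/- arXiv:2102.10417 — 3 statements merged into one kernel-verified Lean document; each statement's English description precedes it below -/
import Mathlib

section
/- Let ℓ be a prime and let G be a subgroup of GL₂(𝔽_ℓ) all of whose elements are upper triangular. Then either the semisimplification G^ss of G is contained in G, or G is diagonalizable, i.e., there exists P ∈ GL₂(𝔽_ℓ) such that every element of P⁻¹GP is a diagonal matrix. -/
/-- The semisimplification of a subgroup `G` of `GL₂(𝔽_ℓ)` consisting of upper triangular
matrices: the set of diagonal matrices `diag(a, d)` in `GL₂(𝔽_ℓ)` such that `[[a, b], [0, d]] ∈ G`
for some `b ∈ 𝔽_ℓ`. -/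
def Subgroup.semisimplification {ℓ : ℕ} (G : Subgroup (GL (Fin 2) (ZMod ℓ))) :
    Set (GL (Fin 2) (ZMod ℓ)) :=
  {g | ∃ a d b : ZMod ℓ, (g : Matrix (Fin 2) (Fin 2) (ZMod ℓ)) = !![a, 0; 0, d] ∧
    ∃ h ∈ G, (h : Matrix (Fin 2) (Fin 2) (ZMod ℓ)) = !![a, b; 0, d]}

private lemma tri_mul_mat {R : Type*} [CommRing R] (g h : GL (Fin 2) R)
    (hg : (g : Matrix (Fin 2) (Fin 2) R) 1 0 = 0)
    (hh : (h : Matrix (Fin 2) (Fin 2) R) 1 0 = 0) :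
    ((g * h : GL (Fin 2) R) : Matrix (Fin 2) (Fin 2) R) =
      !![(g : Matrix (Fin 2) (Fin 2) R) 0 0 * (h : Matrix (Fin 2) (Fin 2) R) 0 0,
         (g : Matrix (Fin 2) (Fin 2) R) 0 0 * (h : Matrix (Fin 2) (Fin 2) R) 0 1 +
           (g : Matrix (Fin 2) (Fin 2) R) 0 1 * (h : Matrix (Fin 2) (Fin 2) R) 1 1;
         0, (g : Matrix (Fin 2) (Fin 2) R) 1 1 * (h : Matrix (Fin 2) (Fin 2) R) 1 1] := by
  ext i j
  rw [Units.val_mul]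
  fin_cases i <;> fin_cases j <;>
    simp [Matrix.mul_apply, Fin.sum_univ_two, hg, hh]

private lemma unipotent_pow_mat {R : Type*} [CommRing R] (u : GL (Fin 2) R) (e : R)
    (hu : (u : Matrix (Fin 2) (Fin 2) R) = !![1, e; 0, 1]) (n : ℕ) :
    ((u ^ n : GL (Fin 2) R) : Matrix (Fin 2) (Fin 2) R) = !![1, (n : R) * e; 0, 1] := by
  induction n with
  | zero =>
    rw [pow_zero, Units.val_one, Matrix.one_fin_two]
    norm_num
  | succ n ih =>
    rw [pow_succ, Units.val_mul, ih, hu, Matrix.mul_fin_two]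
    ext i j
    fin_cases i <;> fin_cases j <;> simp <;> push_cast <;> ring

private lemma scalar_tri_pow_mat {R : Type*} [CommRing R] (g : GL (Fin 2) R) (a c : R)
    (hg : (g : Matrix (Fin 2) (Fin 2) R) = !![a, c; 0, a]) (n : ℕ) :
    ((g ^ (n + 1) : GL (Fin 2) R) : Matrix (Fin 2) (Fin 2) R) =
      !![a ^ (n + 1), ((n : R) + 1) * a ^ n * c; 0, a ^ (n + 1)] := by
  induction n with
  | zero =>
    rw [zero_add, pow_one, hg]
    norm_num
  | succ n ih =>
    rw [pow_succ, Units.val_mul, ih, hg, Matrix.mul_fin_two]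
    ext i j
    fin_cases i <;> fin_cases j <;> simp <;> push_cast <;> ring


/-- Let `ℓ` be a prime and `G` a subgroup of `GL₂(𝔽_ℓ)` all of whose elements
are upper triangular. Then either the semisimplification `G^ss` is contained in `G`, or `G` is
diagonalizable: there exists `P ∈ GL₂(𝔽_ℓ)` such that every element of `P⁻¹GP` is diagonal. -/
theorem semisimplification_subset_or_diagonalizable {ℓ : ℕ} (hℓ : ℓ.Prime)
    (G : Subgroup (GL (Fin 2) (ZMod ℓ)))
    (hG : ∀ g ∈ G, (g : Matrix (Fin 2) (Fin 2) (ZMod ℓ)) 1 0 = 0) :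
    G.semisimplification ⊆ (G : Set (GL (Fin 2) (ZMod ℓ))) ∨
      ∃ P : GL (Fin 2) (ZMod ℓ), ∀ g ∈ G,
        ((P⁻¹ * g * P : GL (Fin 2) (ZMod ℓ)) : Matrix (Fin 2) (Fin 2) (ZMod ℓ)).IsDiag := by
  haveI : Fact ℓ.Prime := ⟨hℓ⟩
  haveI : NeZero ℓ := ⟨hℓ.pos.ne'⟩
  have d00 : ∀ p ∈ G, ∀ q ∈ G, ((p * q : GL (Fin 2) (ZMod ℓ)) : Matrix (Fin 2) (Fin 2) (ZMod ℓ)) 0 0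
      = (p : Matrix (Fin 2) (Fin 2) (ZMod ℓ)) 0 0 * (q : Matrix (Fin 2) (Fin 2) (ZMod ℓ)) 0 0 := by
    intro p hp q hq
    rw [tri_mul_mat p q (hG p hp) (hG q hq)]
    simp
  have d11 : ∀ p ∈ G, ∀ q ∈ G, ((p * q : GL (Fin 2) (ZMod ℓ)) : Matrix (Fin 2) (Fin 2) (ZMod ℓ)) 1 1
      = (p : Matrix (Fin 2) (Fin 2) (ZMod ℓ)) 1 1 * (q : Matrix (Fin 2) (Fin 2) (ZMod ℓ)) 1 1 := by
    intro p hp q hq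
    rw [tri_mul_mat p q (hG p hp) (hG q hq)]
    simp
  have d01 : ∀ p ∈ G, ∀ q ∈ G, ((p * q : GL (Fin 2) (ZMod ℓ)) : Matrix (Fin 2) (Fin 2) (ZMod ℓ)) 0 1
      = (p : Matrix (Fin 2) (Fin 2) (ZMod ℓ)) 0 0 * (q : Matrix (Fin 2) (Fin 2) (ZMod ℓ)) 0 1
        + (p : Matrix (Fin 2) (Fin 2) (ZMod ℓ)) 0 1 * (q : Matrix (Fin 2) (Fin 2) (ZMod ℓ)) 1 1 := by
    intro p hp q hq
    rw [tri_mul_mat p q (hG p hp) (hG q hq)]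
    simp
  -- diagonal entries of inverses multiply to 1
  have hinv : ∀ g ∈ G, (g : Matrix (Fin 2) (Fin 2) (ZMod ℓ)) 0 0 *
        ((g⁻¹ : GL (Fin 2) (ZMod ℓ)) : Matrix (Fin 2) (Fin 2) (ZMod ℓ)) 0 0 = 1 ∧
      (g : Matrix (Fin 2) (Fin 2) (ZMod ℓ)) 1 1 *
        ((g⁻¹ : GL (Fin 2) (ZMod ℓ)) : Matrix (Fin 2) (Fin 2) (ZMod ℓ)) 1 1 = 1 := by
    intro g hg
    constructor
    · rw [← d00 g hg g⁻¹ (G.inv_mem hg), mul_inv_cancel, Units.val_one]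
      simp
    · rw [← d11 g hg g⁻¹ (G.inv_mem hg), mul_inv_cancel, Units.val_one]
      simp
  by_cases h : ∃ u ∈ G, (u : Matrix (Fin 2) (Fin 2) (ZMod ℓ)) 0 0 = 1 ∧
      (u : Matrix (Fin 2) (Fin 2) (ZMod ℓ)) 1 1 = 1 ∧
      (u : Matrix (Fin 2) (Fin 2) (ZMod ℓ)) 0 1 ≠ 0
  · -- G contains a nontrivial unipotent: semisimplification ⊆ G
    left
    obtain ⟨u, huG, hu00, hu11, hu01⟩ := h
    set e := (u : Matrix (Fin 2) (Fin 2) (ZMod ℓ)) 0 1 with he_def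
    have humat : (u : Matrix (Fin 2) (Fin 2) (ZMod ℓ)) = !![1, e; 0, 1] := by
      have := Matrix.eta_fin_two (u : Matrix (Fin 2) (Fin 2) (ZMod ℓ))
      rw [hu00, hu11, hG u huG] at this
      exact this
    rintro g ⟨a, d, b, hgmat, h', hh'G, hh'mat⟩
    have ha : a ≠ 0 := by
      have h1 := (hinv h' hh'G).1
      rw [hh'mat] at h1
      simp at h1
      exact left_ne_zero_of_mul_eq_one h1
    set m : ZMod ℓ := -(b * a⁻¹ * e⁻¹) with hm_def
    set k : ℕ := m.val with hk_def
    have hkm : (k : ZMod ℓ) = m := (ZMod.natCast_val m).trans (ZMod.cast_id _ _)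
    have hmat : ((h' * u ^ k : GL (Fin 2) (ZMod ℓ)) : Matrix (Fin 2) (Fin 2) (ZMod ℓ)) =
        !![a, 0; 0, d] := by
      rw [Units.val_mul, hh'mat, unipotent_pow_mat u e humat k, hkm, Matrix.mul_fin_two]
      ext i j
      fin_cases i <;> fin_cases j <;> simp [hm_def] <;> field_simp <;> ring
    have hgeq : g = h' * u ^ k := Units.ext (by rw [hgmat, hmat])
    rw [hgeq]
    exact G.mul_mem hh'G (G.pow_mem huG k)
  · -- no nontrivial unipotent: G is diagonalizable
    right
    push_neg at h
    by_cases hdiag : ∀ g ∈ G, (g : Matrix (Fin 2) (Fin 2) (ZMod ℓ)) 0 1 = 0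
    · refine ⟨1, fun g hg => ?_⟩
      have hid : (1 : GL (Fin 2) (ZMod ℓ))⁻¹ * g * 1 = g := by group
      rw [hid]
      intro i j hij
      fin_cases i <;> fin_cases j
      · exact absurd rfl hij
      · exact hdiag g hg
      · exact hG g hg
      · exact absurd rfl hij
    · push_neg at hdiag
      obtain ⟨g₀, hg₀G, hc⟩ := hdiag
      set a := (g₀ : Matrix (Fin 2) (Fin 2) (ZMod ℓ)) 0 0 with ha_def
      set d := (g₀ : Matrix (Fin 2) (Fin 2) (ZMod ℓ)) 1 1 with hd_def
      set c := (g₀ : Matrix (Fin 2) (Fin 2) (ZMod ℓ)) 0 1 with hc_def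
      have hg₀mat : (g₀ : Matrix (Fin 2) (Fin 2) (ZMod ℓ)) = !![a, c; 0, d] := by
        have := Matrix.eta_fin_two (g₀ : Matrix (Fin 2) (Fin 2) (ZMod ℓ))
        rw [hG g₀ hg₀G] at this
        exact this
      have ha0 : a ≠ 0 := left_ne_zero_of_mul_eq_one (hinv g₀ hg₀G).1
      -- a ≠ d
      have had : a ≠ d := by
        intro hade
        have hg₀mat' : (g₀ : Matrix (Fin 2) (Fin 2) (ZMod ℓ)) = !![a, c; 0, a] := by
          rw [hg₀mat, ← hade]
        have hpow := scalar_tri_pow_mat g₀ a c hg₀mat' (ℓ - 2)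
        have hexp : ℓ - 2 + 1 = ℓ - 1 := by have := hℓ.two_le; omega
        rw [hexp] at hpow
        have hfermat : a ^ (ℓ - 1) = 1 := ZMod.pow_card_sub_one_eq_one ha0
        have hv := h (g₀ ^ (ℓ - 1)) (G.pow_mem hg₀G (ℓ - 1))
        rw [hpow] at hv
        have h01 := hv (by simp [hfermat]) (by simp [hfermat])
        change (((ℓ - 2 : ℕ) : ZMod ℓ) + 1) * a ^ (ℓ - 2) * c = 0 at h01
        have hcoef : ((ℓ - 2 : ℕ) : ZMod ℓ) + 1 = -1 := by
          have h2 : ((ℓ - 2 : ℕ) : ZMod ℓ) = (ℓ : ZMod ℓ) - 2 := by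
            push_cast [Nat.cast_sub (hℓ.two_le)]
            ring
          rw [h2, ZMod.natCast_self]
          ring
        rw [hcoef] at h01
        exact (mul_ne_zero (mul_ne_zero (neg_ne_zero.mpr one_ne_zero)
          (pow_ne_zero _ ha0)) hc) h01
      have hda : d - a ≠ 0 := sub_ne_zero.mpr (Ne.symm had)
      set t : ZMod ℓ := c * (d - a)⁻¹ with ht_def
      have hP1 : !![(1 : ZMod ℓ), t; 0, 1] * !![1, -t; 0, 1] = 1 := by
        rw [Matrix.mul_fin_two]
        ext i j
        fin_cases i <;> fin_cases j <;> simp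
      have hP2 : !![(1 : ZMod ℓ), -t; 0, 1] * !![1, t; 0, 1] = 1 := by
        rw [Matrix.mul_fin_two]
        ext i j
        fin_cases i <;> fin_cases j <;> simp
      refine ⟨⟨!![1, t; 0, 1], !![1, -t; 0, 1], hP1, hP2⟩, fun g hg => ?_⟩
      set x := (g : Matrix (Fin 2) (Fin 2) (ZMod ℓ)) 0 0 with hx_def
      set w := (g : Matrix (Fin 2) (Fin 2) (ZMod ℓ)) 1 1 with hw_def
      set y := (g : Matrix (Fin 2) (Fin 2) (ZMod ℓ)) 0 1 with hy_def
      have hgmat : (g : Matrix (Fin 2) (Fin 2) (ZMod ℓ)) = !![x, y; 0, w] := by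
        have := Matrix.eta_fin_two (g : Matrix (Fin 2) (Fin 2) (ZMod ℓ))
        rw [hG g hg] at this
        exact this
      -- memberships
      have hgi : g⁻¹ ∈ G := G.inv_mem hg
      have hg₀i : g₀⁻¹ ∈ G := G.inv_mem hg₀G
      have hm1 : g * g₀ ∈ G := G.mul_mem hg hg₀G
      have hm2 : g * g₀ * g⁻¹ ∈ G := G.mul_mem hm1 hgi
      have hkkG : g * g₀ * g⁻¹ * g₀⁻¹ ∈ G := G.mul_mem hm2 hg₀i
      have i1 := (hinv g hg).1
      have i1' := (hinv g hg).2
      have i2 := (hinv g₀ hg₀G).1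
      have i2' := (hinv g₀ hg₀G).2
      have k00 : ((g * g₀ * g⁻¹ * g₀⁻¹ : GL (Fin 2) (ZMod ℓ)) :
          Matrix (Fin 2) (Fin 2) (ZMod ℓ)) 0 0 = 1 := by
        rw [d00 _ hm2 _ hg₀i, d00 _ hm1 _ hgi, d00 _ hg _ hg₀G]
        linear_combination ((g₀ : Matrix (Fin 2) (Fin 2) (ZMod ℓ)) 0 0 *
          ((g₀⁻¹ : GL (Fin 2) (ZMod ℓ)) : Matrix (Fin 2) (Fin 2) (ZMod ℓ)) 0 0) * i1 + i2
      have k11 : ((g * g₀ * g⁻¹ * g₀⁻¹ : GL (Fin 2) (ZMod ℓ)) :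
          Matrix (Fin 2) (Fin 2) (ZMod ℓ)) 1 1 = 1 := by
        rw [d11 _ hm2 _ hg₀i, d11 _ hm1 _ hgi, d11 _ hg _ hg₀G]
        linear_combination ((g₀ : Matrix (Fin 2) (Fin 2) (ZMod ℓ)) 1 1 *
          ((g₀⁻¹ : GL (Fin 2) (ZMod ℓ)) : Matrix (Fin 2) (Fin 2) (ZMod ℓ)) 1 1) * i1' + i2'
      have k01 := h _ hkkG k00 k11
      have k10 := hG _ hkkG
      have kkmat : ((g * g₀ * g⁻¹ * g₀⁻¹ : GL (Fin 2) (ZMod ℓ)) :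
          Matrix (Fin 2) (Fin 2) (ZMod ℓ)) = 1 := by
        have heta := Matrix.eta_fin_two ((g * g₀ * g⁻¹ * g₀⁻¹ : GL (Fin 2) (ZMod ℓ)) :
          Matrix (Fin 2) (Fin 2) (ZMod ℓ))
        rw [k00, k11, k01, k10] at heta
        rw [heta, ← Matrix.one_fin_two]
      have hkk1 : g * g₀ * g⁻¹ * g₀⁻¹ = 1 := Units.ext (by rw [kkmat, Units.val_one])
      have hgg : g * g₀ = g₀ * g := by
        calc g * g₀ = g * g₀ * g⁻¹ * g₀⁻¹ * (g₀ * g) := by group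
        _ = 1 * (g₀ * g) := by rw [hkk1]
        _ = g₀ * g := one_mul _
      have hcomm : x * c + y * d = a * y + c * w := by
        have e01l := d01 g hg g₀ hg₀G
        have e01r := d01 g₀ hg₀G g hg
        rw [hgg] at e01l
        rw [e01r] at e01l
        linear_combination -e01l
      have hmul : (((⟨!![1, t; 0, 1], !![1, -t; 0, 1], hP1, hP2⟩ :
            GL (Fin 2) (ZMod ℓ))⁻¹ * g * ⟨!![1, t; 0, 1], !![1, -t; 0, 1], hP1, hP2⟩ :
            GL (Fin 2) (ZMod ℓ)) : Matrix (Fin 2) (Fin 2) (ZMod ℓ)) =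
          !![1, -t; 0, 1] * (g : Matrix (Fin 2) (Fin 2) (ZMod ℓ)) * !![1, t; 0, 1] := rfl
      intro i j hij
      rw [hmul, hgmat, Matrix.mul_fin_two, Matrix.mul_fin_two]
      fin_cases i <;> fin_cases j
      · exact absurd rfl hij
      · show (1 * x + -t * 0) * t + (1 * y + -t * w) * 1 = 0
        have hinv2 : (d - a) * (d - a)⁻¹ = 1 := mul_inv_cancel₀ hda
        linear_combination (x - w) * ht_def + (d - a)⁻¹ * hcomm + (-y) * hinv2
      · simp
      · exact absurd rfl hij
end

section
/- Let ℓ be a prime and let G be a subgroup of GL₂(𝔽_ℓ) all of whose elements are upper triangular. If G contains a non-diagonal matrix with repeated eigenvalues, i.e., a matrix [[a,b],[0,a]] with b ≠ 0, then G contains the transvection [[1,1],[0,1]], and the semisimplification G^ss is contained in G. -/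
section Aux

variable {ℓ : ℕ} [Fact ℓ.Prime]

lemma aux_unipotent_pow (c : ZMod ℓ) (n : ℕ) :
    (!![1, c; 0, 1] : Matrix (Fin 2) (Fin 2) (ZMod ℓ)) ^ n = !![1, (n : ZMod ℓ) * c; 0, 1] := by
  induction n with
  | zero => simp [Matrix.one_fin_two]
  | succ n ih =>
      rw [pow_succ, ih, Matrix.mul_fin_two]
      push_cast
      ring_nf

lemma aux_rep_pow (a b : ZMod ℓ) (ha : a ≠ 0) (n : ℕ) :
    (!![a, b; 0, a] : Matrix (Fin 2) (Fin 2) (ZMod ℓ)) ^ n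
      = !![a ^ n, (n : ZMod ℓ) * b * a ^ n * a⁻¹; 0, a ^ n] := by
  induction n with
  | zero => simp [Matrix.one_fin_two]
  | succ n ih =>
      rw [pow_succ, ih, Matrix.mul_fin_two]
      ext i j
      fin_cases i <;> fin_cases j <;>
        · push_cast
          simp [pow_succ]
          try (field_simp; ring)

lemma aux_coe_det_ne_zero (g : GL (Fin 2) (ZMod ℓ))
    {a b d : ZMod ℓ} (h : (g : Matrix (Fin 2) (Fin 2) (ZMod ℓ)) = !![a, b; 0, d]) :
    a ≠ 0 ∧ d ≠ 0 := by
  have hu : IsUnit ((g : Matrix (Fin 2) (Fin 2) (ZMod ℓ)).det) :=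
    (Matrix.isUnit_iff_isUnit_det _).mp (Units.isUnit g)
  rw [h, Matrix.det_fin_two_of] at hu
  simp only [mul_zero, sub_zero] at hu
  have := hu.ne_zero
  constructor
  · rintro rfl; simp at this
  · rintro rfl; simp at this

end Aux

/-- Let `ℓ` be a prime and `G` a subgroup of `GL₂(𝔽_ℓ)` all of whose elements
are upper triangular. If `G` contains a non-diagonal matrix with repeated eigenvalues, i.e., a
matrix `[[a, b], [0, a]]` with `b ≠ 0`, then `G` contains the transvection `[[1, 1], [0, 1]]`,
and `G^ss ⊆ G`. -/
theorem transvection_mem_and_semisimplification_subset {ℓ : ℕ} (hℓ : ℓ.Prime)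
    (G : Subgroup (GL (Fin 2) (ZMod ℓ)))
    (hG : ∀ g ∈ G, (g : Matrix (Fin 2) (Fin 2) (ZMod ℓ)) 1 0 = 0)
    (hrep : ∃ γ ∈ G, ∃ a b : ZMod ℓ, b ≠ 0 ∧
      (γ : Matrix (Fin 2) (Fin 2) (ZMod ℓ)) = !![a, b; 0, a]) :
    (∃ t ∈ G, (t : Matrix (Fin 2) (Fin 2) (ZMod ℓ)) = !![1, 1; 0, 1]) ∧
      G.semisimplification ⊆ (G : Set (GL (Fin 2) (ZMod ℓ))) := by
  haveI : Fact ℓ.Prime := ⟨hℓ⟩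
  haveI : NeZero ℓ := ⟨hℓ.pos.ne'⟩
  obtain ⟨γ, hγG, a, b, hb, hγ⟩ := hrep
  obtain ⟨ha, -⟩ := aux_coe_det_ne_zero γ hγ
  set c : ZMod ℓ := (-1) * b * a⁻¹ with hc
  have hcne : c ≠ 0 := by
    rw [hc]; intro h
    rcases mul_eq_zero.mp h with h' | h'
    · rcases mul_eq_zero.mp h' with h'' | h''
      · exact absurd h'' (by norm_num)
      · exact hb h''
    · exact ha (inv_eq_zero.mp h')
  have hpow : ((γ ^ (ℓ - 1) : GL (Fin 2) (ZMod ℓ)) : Matrix (Fin 2) (Fin 2) (ZMod ℓ))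
      = !![1, c; 0, 1] := by
    have h0 : ((γ ^ (ℓ - 1) : GL (Fin 2) (ZMod ℓ)) : Matrix (Fin 2) (Fin 2) (ZMod ℓ))
        = ((γ : Matrix (Fin 2) (Fin 2) (ZMod ℓ))) ^ (ℓ - 1) :=
      Units.val_pow_eq_pow_val γ (ℓ - 1)
    rw [h0, hγ, aux_rep_pow a b ha]
    have h1 : a ^ (ℓ - 1) = 1 := ZMod.pow_card_sub_one_eq_one ha
    have h2 : ((ℓ - 1 : ℕ) : ZMod ℓ) = -1 := by
      rw [Nat.cast_sub hℓ.one_lt.le]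
      simp
    rw [h1, h2, hc]
    ring_nf
  -- every upper unitriangular matrix is in G
  have key : ∀ x : ZMod ℓ, ∃ u ∈ G, (u : Matrix (Fin 2) (Fin 2) (ZMod ℓ)) = !![1, x; 0, 1] := by
    intro x
    refine ⟨(γ ^ (ℓ - 1)) ^ ((x * c⁻¹).val), G.pow_mem (G.pow_mem hγG _) _, ?_⟩
    rw [Units.val_pow_eq_pow_val, hpow, aux_unipotent_pow]
    congr 1
    rw [ZMod.natCast_val, ZMod.cast_id]
    field_simp
  refine ⟨key 1, ?_⟩
  rintro g ⟨a', d', b', hg, h, hhG, hh⟩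
  obtain ⟨ha', -⟩ := aux_coe_det_ne_zero h hh
  obtain ⟨u, huG, hu⟩ := key (-(b' * a'⁻¹))
  have hmul : ((h * u : GL (Fin 2) (ZMod ℓ)) : Matrix (Fin 2) (Fin 2) (ZMod ℓ))
      = !![a', 0; 0, d'] := by
    rw [Units.val_mul, hh, hu, Matrix.mul_fin_two]
    ext i j
    fin_cases i <;> fin_cases j <;> simp <;> field_simp <;> ring
  have hgu : g = h * u := Units.ext (hg.trans hmul.symm)
  rw [hgu]
  exact G.mul_mem hhG huG
end

section
/- Let ℓ be a prime and let G be a subgroup of GL₂(𝔽_ℓ) all of whose elements are upper triangular. If G is not commutative, then the semisimplification G^ss is contained in G. -/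
/-- Let `ℓ` be a prime and `G` a subgroup of `GL₂(𝔽_ℓ)` all of whose elements
are upper triangular. If `G` is not commutative, then `G^ss ⊆ G`. -/
theorem semisimplification_subset_of_not_commutative {ℓ : ℕ} (hℓ : ℓ.Prime)
    (G : Subgroup (GL (Fin 2) (ZMod ℓ)))
    (hG : ∀ g ∈ G, (g : Matrix (Fin 2) (Fin 2) (ZMod ℓ)) 1 0 = 0)
    (hnc : ∃ g ∈ G, ∃ h ∈ G, g * h ≠ h * g) :
    G.semisimplification ⊆ (G : Set (GL (Fin 2) (ZMod ℓ))) := by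
  haveI : Fact ℓ.Prime := ⟨hℓ⟩
  have heta : ∀ g ∈ G, (g : GL (Fin 2) (ZMod ℓ)).val =
      !![g.val 0 0, g.val 0 1; 0, g.val 1 1] := by
    intro g hg
    rw [← hG g hg]
    exact Matrix.etaExpand_eq g.val ▸ rfl
  have hdiag : ∀ g ∈ G, g.val 0 0 * (g⁻¹ : GL (Fin 2) (ZMod ℓ)).val 0 0 = 1 ∧
      g.val 1 1 * (g⁻¹ : GL (Fin 2) (ZMod ℓ)).val 1 1 = 1 := by
    intro g hg
    have h1 : g.val * (g⁻¹ : GL (Fin 2) (ZMod ℓ)).val = 1 := g.mul_inv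
    rw [heta g hg, heta g⁻¹ (G.inv_mem hg), Matrix.mul_fin_two, Matrix.one_fin_two] at h1
    constructor
    · have := congrFun (congrFun h1 0) 0; simpa using this
    · have := congrFun (congrFun h1 1) 1; simpa using this
  obtain ⟨g, hg, h, hh, hcomm⟩ := hnc
  set c : GL (Fin 2) (ZMod ℓ) := g * h * g⁻¹ * h⁻¹ with hc
  have hcG : c ∈ G := G.mul_mem (G.mul_mem (G.mul_mem hg hh) (G.inv_mem hg)) (G.inv_mem hh)
  have hcval : c.val = !![1, c.val 0 1; 0, 1] := by
    have e : c.val = g.val * h.val * (g⁻¹ : GL (Fin 2) (ZMod ℓ)).val *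
        (h⁻¹ : GL (Fin 2) (ZMod ℓ)).val := rfl
    rw [heta g hg, heta h hh, heta g⁻¹ (G.inv_mem hg), heta h⁻¹ (G.inv_mem hh)] at e
    have e00 : c.val 0 0 = 1 := by
      rw [e, Matrix.mul_fin_two, Matrix.mul_fin_two, Matrix.mul_fin_two]
      obtain ⟨hg0, -⟩ := hdiag g hg
      obtain ⟨hh0, -⟩ := hdiag h hh
      simp only [Matrix.cons_val_zero, Matrix.cons_val_one, Matrix.head_cons, Matrix.head_fin_const, Matrix.of_apply, Matrix.cons_val']
      linear_combination h.val 0 0 * (h⁻¹ : GL (Fin 2) (ZMod ℓ)).val 0 0 * hg0 + hh0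
    have e11 : c.val 1 1 = 1 := by
      rw [e, Matrix.mul_fin_two, Matrix.mul_fin_two, Matrix.mul_fin_two]
      obtain ⟨-, hg1⟩ := hdiag g hg
      obtain ⟨-, hh1⟩ := hdiag h hh
      simp only [Matrix.cons_val_zero, Matrix.cons_val_one, Matrix.head_cons, Matrix.head_fin_const, Matrix.of_apply, Matrix.cons_val']
      linear_combination h.val 1 1 * (h⁻¹ : GL (Fin 2) (ZMod ℓ)).val 1 1 * hg1 + hh1
    have := heta c hcG
    rw [e00, e11] at this
    exact this
  set x : ZMod ℓ := c.val 0 1 with hx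
  have hxne : x ≠ 0 := by
    intro h0
    apply hcomm
    have hc1 : c = 1 := by
      apply Units.ext
      rw [hcval, h0, ← Matrix.one_fin_two]
      rfl
    have : (g * h) * (h * g)⁻¹ = 1 := by
      rw [mul_inv_rev]
      rw [hc] at hc1
      group at hc1 ⊢
      exact hc1
    exact mul_inv_eq_one.mp this
  have hpow : ∀ n : ℕ, (c ^ n : GL (Fin 2) (ZMod ℓ)).val = !![1, (n : ZMod ℓ) * x; 0, 1] := by
    intro n
    induction n with
    | zero =>
      show (1 : Matrix (Fin 2) (Fin 2) (ZMod ℓ)) = _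
      rw [Matrix.one_fin_two]
      norm_num
    | succ n ih =>
      have h2 : (c ^ (n + 1) : GL (Fin 2) (ZMod ℓ)).val =
          (c ^ n : GL (Fin 2) (ZMod ℓ)).val * c.val := by rw [pow_succ]; rfl
      rw [h2, ih, hcval, Matrix.mul_fin_two]
      ext i j
      fin_cases i <;> fin_cases j <;> simp <;> ring
  have hU : ∀ y : ZMod ℓ, ∃ u ∈ G, u.val = !![1, y; 0, 1] := by
    intro y
    refine ⟨c ^ (y * x⁻¹).val, G.pow_mem hcG _, ?_⟩
    rw [hpow]
    congr 1
    rw [ZMod.natCast_val, ZMod.cast_id]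
    field_simp
  rintro g' ⟨a, d, b, hg', u, huG, hu⟩
  have ha : a ≠ 0 := by
    intro h0
    have h1 : u.val * (u⁻¹ : GL (Fin 2) (ZMod ℓ)).val = 1 := u.mul_inv
    have h2 := congrFun (congrFun h1 0) 0
    rw [hu, heta u⁻¹ (G.inv_mem huG)] at h2
    simp [Matrix.mul_fin_two, h0] at h2
  obtain ⟨v, hvG, hv⟩ := hU (-(a⁻¹ * b))
  have hgv : g' = u * v := by
    apply Units.ext
    show g'.val = u.val * v.val
    rw [hg', hu, hv, Matrix.mul_fin_two]
    ext i j
    fin_cases i <;> fin_cases j <;> simp <;> field_simp <;> ring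
  rw [hgv]
  exact G.mul_mem huG hvG
end
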